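/- Let d ≥ 1, let a, w_1,…,w_d ∈ ℂ with Re(a) > 0 and Re(w_i) > 0, let M be a non-negative integer, and let α ∈ ℂ with Re(α) > d − M − 1. Let b : ℕ → ℂ and r > 0 satisfy Σ_{k=0}^∞ b_k z^k/k! = z^d ∏_{i=1}^d w_i/(e^{w_i z} − 1) for all z with 0 < |z| < r. Then the function t ↦ e^{−at} ( t^{α−1} ∏_{i=1}^d (1−e^{−w_i t})^{−1} − (t^{α−d−1}/∏_{i=1}^d w_i) Σ_{k=0}^{M} (−1)^k b_k t^k/k! ) is Lebesgue integrable on (0,∞) (t^{β} denoting the principal power of the positive real t). -/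

import Mathlib

open Complex MeasureTheory Set Filter Topology

lemma aux_integrable_rpow_exp {bb : ℝ} (hb : 0 < bb) (c s : ℝ) (hc : 0 < c) :
    IntegrableOn (fun x : ℝ => x ^ s * Real.exp (-bb * x)) (Ioi c) := by
  obtain ⟨N, hN⟩ := exists_nat_ge s
  have base : IntegrableOn (fun x : ℝ => x ^ (N : ℝ) * Real.exp (-bb * x)) (Ioi 0) := by
    have := integrableOn_rpow_mul_exp_neg_mul_rpow (s := (N : ℝ)) (p := 1)
      (by exact_mod_cast neg_one_lt_zero.trans_le (Nat.cast_nonneg N) : (-1:ℝ) < (N:ℝ)) zero_lt_one hb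
    simpa using this
  have hmeas : AEStronglyMeasurable (fun x : ℝ => x ^ s * Real.exp (-bb * x))
      (volume.restrict (Ioi c)) := by
    apply ContinuousOn.aestronglyMeasurable ?_ measurableSet_Ioi
    intro x hx
    have hx0 : (0:ℝ) < x := hc.trans hx
    exact ((Real.continuousAt_rpow_const x s (Or.inl hx0.ne')).mul
      ((Real.continuous_exp.comp (continuous_const.mul continuous_id)).continuousAt)).continuousWithinAt
  refine Integrable.mono' ((base.mono_set (Ioi_subset_Ioi hc.le)).const_mul (c ^ (s - N))) hmeas ?_
  filter_upwards [ae_restrict_mem measurableSet_Ioi] with x hx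
  have hx0 : (0:ℝ) < x := hc.trans hx
  have h1 : ‖x ^ s * Real.exp (-bb * x)‖ = x ^ s * Real.exp (-bb * x) := by
    rw [Real.norm_eq_abs, _root_.abs_of_nonneg]
    positivity
  rw [h1]
  have h2 : x ^ s = x ^ (s - N) * x ^ (N : ℝ) := by
    rw [← Real.rpow_add hx0]; ring_nf
  have h3 : x ^ (s - (N:ℝ)) ≤ c ^ (s - (N:ℝ)) :=
    Real.rpow_le_rpow_of_nonpos hc hx.le (by linarith)
  calc x ^ s * Real.exp (-bb * x) = x ^ (s - N) * (x ^ (N:ℝ) * Real.exp (-bb * x)) := by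
        rw [h2]; ring
    _ ≤ c ^ (s - N) * (x ^ (N:ℝ) * Real.exp (-bb * x)) := by
        apply mul_le_mul_of_nonneg_right h3
        positivity


/-- Integrability of the subtracted integrand in Ruijsenaars' representation, for
`Re(α) > d − M − 1`. -/
theorem barnes_ruijsenaars_integrable (d : ℕ) (hd : 1 ≤ d) (a : ℂ) (w : Fin d → ℂ)
    (ha : 0 < a.re) (hw : ∀ i, 0 < (w i).re) (M : ℕ)
    (α : ℂ) (hα : (d : ℝ) - M - 1 < α.re)
    (b : ℕ → ℂ) (r : ℝ) (hr : 0 < r)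
    (hb : ∀ z : ℂ, 0 < ‖z‖ → ‖z‖ < r →
      HasSum (fun k : ℕ => b k * z ^ k / (k.factorial : ℂ))
        (z ^ d * ∏ i, w i / (Complex.exp (w i * z) - 1))) :
    IntegrableOn (fun t : ℝ =>
      Complex.exp (-a * t) *
        ((t : ℂ) ^ (α - 1) * ∏ i, (1 - Complex.exp (-(w i) * t))⁻¹ -
          (t : ℂ) ^ (α - d - 1) / (∏ i, w i) *
            ∑ k ∈ Finset.range (M + 1), (-1 : ℂ) ^ k * b k * (t : ℂ) ^ k / (k.factorial : ℂ)))
      (Ioi 0) := by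
  set P : ℂ := ∏ i, w i with hPdef
  have hwne : ∀ i, w i ≠ 0 := fun i h => by simpa [h] using hw i
  have hP : P ≠ 0 := Finset.prod_ne_zero_iff.mpr fun i _ => hwne i
  have hPn : (0:ℝ) < ‖P‖ := norm_pos_iff.mpr hP
  have hnormexp : ∀ (z : ℂ) (t : ℝ), ‖Complex.exp (z * t)‖ = Real.exp (z.re * t) := by
    intro z t
    rw [Complex.norm_exp]
    congr 1
    simp [Complex.mul_re]
  have hncpow : ∀ (t : ℝ), 0 < t → ∀ s : ℂ, ‖(t:ℂ) ^ s‖ = t ^ s.re := by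
    intro t ht s
    rw [Complex.norm_cpow_eq_rpow_re_of_pos ht]
  have hone : ∀ (i : Fin d) (t : ℝ), 0 < t → 1 - Complex.exp (-(w i) * t) ≠ 0 := by
    intro i t ht h
    rw [sub_eq_zero] at h
    have h2 : ‖Complex.exp (-(w i) * (t:ℂ))‖ < 1 := by
      rw [hnormexp, Real.exp_lt_one_iff]
      have := hw i
      simp only [Complex.neg_re]
      nlinarith
    rw [← h] at h2
    simp at h2
  -- key HasSum identity
  have key : ∀ t : ℝ, 0 < t → t < r →
      HasSum (fun k : ℕ => (-1:ℂ)^k * b k * (t:ℂ)^k / (k.factorial : ℂ))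
        ((t:ℂ)^d * P * ∏ i, (1 - Complex.exp (-(w i) * t))⁻¹) := by
    intro t ht htr
    have h1 := hb (-(t:ℂ)) (by simpa using ht.ne') (by simpa [abs_of_pos ht] using htr)
    have hfun : ∀ k : ℕ, b k * (-(t:ℂ))^k / (k.factorial : ℂ)
        = (-1:ℂ)^k * b k * (t:ℂ)^k / (k.factorial : ℂ) := by
      intro k; rw [neg_pow]; ring
    have hval : (-(t:ℂ))^d * ∏ i, w i / (Complex.exp (w i * -(t:ℂ)) - 1)
        = (t:ℂ)^d * P * ∏ i, (1 - Complex.exp (-(w i) * t))⁻¹ := by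
      have hterm : ∀ i ∈ Finset.univ, w i / (Complex.exp (w i * -(t:ℂ)) - 1)
          = (-1) * (w i * (1 - Complex.exp (-(w i) * t))⁻¹) := by
        intro i _
        have hE : Complex.exp (w i * -(t:ℂ)) = Complex.exp (-(w i) * t) := by ring_nf
        rw [hE]
        have h4 : Complex.exp (-(w i) * (t:ℂ)) - 1 = -(1 - Complex.exp (-(w i) * t)) := by ring
        rw [div_eq_mul_inv, h4, inv_neg]
        ring
      rw [Finset.prod_congr rfl hterm, Finset.prod_mul_distrib, Finset.prod_const,
        Finset.card_univ, Fintype.card_fin, Finset.prod_mul_distrib, ← hPdef, neg_pow]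
      have hneg : ((-1:ℂ))^d * ((-1:ℂ))^d = 1 := by rw [← mul_pow]; norm_num
      calc ((-1:ℂ))^d * (t:ℂ)^d * ((-1:ℂ)^d * (P * ∏ i, (1 - Complex.exp (-(w i) * t))⁻¹))
          = ((-1:ℂ)^d * (-1:ℂ)^d) * ((t:ℂ)^d * (P * ∏ i, (1 - Complex.exp (-(w i) * t))⁻¹)) := by
            ring
        _ = (t:ℂ)^d * P * ∏ i, (1 - Complex.exp (-(w i) * t))⁻¹ := by rw [hneg]; ring
    rw [hval] at h1
    simpa only [hfun] using h1
  -- continuity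
  set F : ℝ → ℂ := fun t =>
    Complex.exp (-a * t) *
      ((t : ℂ) ^ (α - 1) * ∏ i, (1 - Complex.exp (-(w i) * t))⁻¹ -
        (t : ℂ) ^ (α - d - 1) / P *
          ∑ k ∈ Finset.range (M + 1), (-1 : ℂ) ^ k * b k * (t : ℂ) ^ k / (k.factorial : ℂ))
    with hF
  have hcexp : ∀ z : ℂ, Continuous fun t : ℝ => Complex.exp (z * t) :=
    fun z => Complex.continuous_exp.comp (continuous_const.mul Complex.continuous_ofReal)
  have hQcont : ContinuousOn (fun t : ℝ => ∏ i, (1 - Complex.exp (-(w i) * t))⁻¹) (Ioi 0) := by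
    intro t ht
    apply ContinuousAt.continuousWithinAt
    apply tendsto_finset_prod
    intro i _
    exact ((continuous_const.sub (hcexp (-(w i)))).continuousAt).inv₀ (hone i t ht)
  have hpowcont : ∀ s : ℂ, ContinuousOn (fun t : ℝ => (t:ℂ) ^ s) (Ioi 0) := by
    intro s t ht
    apply ContinuousAt.continuousWithinAt
    exact (continuousAt_cpow_const
      (mem_slitPlane_iff.mpr (Or.inl (by simpa using ht)))).comp
      Complex.continuous_ofReal.continuousAt
  have hsumcont : Continuous fun t : ℝ =>
      ∑ k ∈ Finset.range (M+1), (-1:ℂ)^k * b k * (t:ℂ)^k / (k.factorial:ℂ) := by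
    apply continuous_finset_sum
    intro k _
    exact (continuous_const.mul (Complex.continuous_ofReal.pow k)).div_const _
  have hcont : ContinuousOn F (Ioi 0) := by
    apply ContinuousOn.mul (hcexp (-a)).continuousOn
    apply ContinuousOn.sub ((hpowcont _).mul hQcont)
    exact ((hpowcont _).div_const _).mul hsumcont.continuousOn
  -- coefficient bound
  set ρ : ℝ := r / 2 with hρdef
  have hρ : 0 < ρ := by positivity
  obtain ⟨A, hA⟩ : ∃ A : ℝ, ∀ k : ℕ, ‖b k‖ * ρ ^ k / (k.factorial : ℝ) ≤ A := by
    have h1 := hb (ρ : ℂ) (by simpa [abs_of_pos hρ] using hρ)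
      (by simp only [Complex.norm_real, Real.norm_eq_abs, abs_of_pos hρ]; linarith)
    have h2 : Tendsto (fun k : ℕ => ‖b k * (ρ:ℂ)^k / (k.factorial : ℂ)‖) atTop (𝓝 0) := by
      simpa using (h1.summable.tendsto_atTop_zero).norm
    obtain ⟨A, hA⟩ := h2.bddAbove_range
    refine ⟨A, fun k => ?_⟩
    have h3 := hA ⟨k, rfl⟩
    have h4 : ‖b k * (ρ:ℂ)^k / (k.factorial : ℂ)‖ = ‖b k‖ * ρ ^ k / (k.factorial : ℝ) := by
      simp [norm_div, norm_mul, norm_pow, Complex.norm_real, Real.norm_eq_abs, abs_of_pos hρ]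
    simpa [abs_of_pos hρ] using h3
  have hA0 : 0 ≤ A := le_trans (by positivity) (hA 0)
  set c : ℝ := r / 4 with hcdef
  have hc : 0 < c := by positivity
  set β : ℝ := α.re - d + M with hβdef
  have hβ : (-1:ℝ) < β := by rw [hβdef]; linarith
  set C : ℝ := ‖P‖⁻¹ * (2 * A / ρ ^ (M+1)) with hCdef
  have hre1 : (α - (d:ℂ) - 1).re = α.re - d - 1 := by simp
  -- tail bound near 0
  have tailbound : ∀ t : ℝ, 0 < t → t ≤ c → ‖F t‖ ≤ C * t ^ β := by
    intro t ht htc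
    have htC : (t:ℂ) ≠ 0 := by exact_mod_cast ht.ne'
    set q : ℝ := t / ρ with hqdef
    have hq0 : 0 ≤ q := by positivity
    have hqh : q ≤ 1/2 := by
      rw [hqdef, div_le_iff₀ hρ, hρdef]
      rw [hcdef] at htc
      linarith
    have hq1 : q < 1 := lt_of_le_of_lt hqh (by norm_num)
    set u : ℕ → ℂ := fun k => (-1:ℂ)^k * b k * (t:ℂ)^k / (k.factorial : ℂ) with hudef
    set Q : ℂ := ∏ i, (1 - Complex.exp (-(w i) * t))⁻¹ with hQdef
    set S : ℂ := (t:ℂ)^d * P * Q with hSdef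
    have hk : HasSum u S := key t ht (by rw [hcdef] at htc; linarith)
    set Su : ℂ := ∑ k ∈ Finset.range (M+1), u k with hSudef
    have hSu2 : HasSum (fun n => u (n + (M+1))) (S - Su) := by
      apply (hasSum_nat_add_iff (f := u) (M+1)).mpr
      rwa [sub_add_cancel]
    -- norm of each coefficient
    have hterm : ∀ m : ℕ, ‖u m‖ ≤ A * q ^ m := by
      intro m
      have h4 : ‖u m‖ = ‖b m‖ * t ^ m / (m.factorial : ℝ) := by
        rw [hudef]
        simp [norm_div, norm_mul, norm_pow, Complex.norm_real, Real.norm_eq_abs, abs_of_pos ht]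
      rw [h4]
      have htq : t = ρ * q := by rw [hqdef]; field_simp
      have h5 : ‖b m‖ * t ^ m / (m.factorial : ℝ)
          = (‖b m‖ * ρ ^ m / (m.factorial : ℝ)) * q ^ m := by
        rw [htq, mul_pow]; ring
      rw [h5]
      exact mul_le_mul_of_nonneg_right (hA m) (pow_nonneg hq0 m)
    have hgeo : HasSum (fun n : ℕ => (A * q ^ (M+1)) * q ^ n) ((A * q ^ (M+1)) * (1 - q)⁻¹) :=
      (hasSum_geometric_of_lt_one hq0 hq1).mul_left _
    have hT1 : ‖S - Su‖ ≤ (A * q ^ (M+1)) * (1 - q)⁻¹ := by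
      rw [← hSu2.tsum_eq]
      apply tsum_of_norm_bounded hgeo
      intro n
      calc ‖u (n + (M+1))‖ ≤ A * q ^ (n + (M+1)) := hterm _
        _ = (A * q ^ (M+1)) * q ^ n := by rw [pow_add]; ring
    have hT : ‖S - Su‖ ≤ A * q ^ (M+1) * 2 := by
      refine le_trans hT1 (mul_le_mul_of_nonneg_left ?_ (by positivity))
      calc (1 - q)⁻¹ ≤ ((1:ℝ)/2)⁻¹ := by
            apply inv_anti₀ (by norm_num)
            linarith
        _ = 2 := by norm_num
    -- rewrite F t
    have hsplitpow : (t:ℂ)^(α-1) = (t:ℂ)^(α - d - 1) * (t:ℂ)^(d:ℕ) := by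
      rw [← Complex.cpow_natCast, ← Complex.cpow_add _ _ htC]
      congr 1
      push_cast
      ring
    have hFt : F t = Complex.exp (-a * t) * ((t:ℂ)^(α - d - 1) / P * (S - Su)) := by
      rw [hF]
      simp only [hSudef, hudef, hSdef, hQdef]
      congr 1
      rw [hsplitpow]
      field_simp
      ring
    have hexple : ‖Complex.exp (-a * (t:ℂ))‖ ≤ 1 := by
      rw [hnormexp, Real.exp_le_one_iff]
      simp only [Complex.neg_re]
      nlinarith
    have h6 : ‖F t‖ ≤ 1 * (t ^ (α.re - (d:ℝ) - 1) / ‖P‖ * (A * q ^ (M+1) * 2)) := by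
      rw [hFt, norm_mul, norm_mul, norm_div]
      apply mul_le_mul hexple ?_ (by positivity) (by norm_num)
      rw [hncpow t ht, hre1]
      exact mul_le_mul_of_nonneg_left hT (by positivity)
    refine le_trans h6 (le_of_eq ?_)
    have h7 : t ^ (α.re - (d:ℝ) - 1) * t ^ (M+1 : ℕ) = t ^ β := by
      rw [← Real.rpow_natCast t (M+1), ← Real.rpow_add ht, hβdef]
      congr 1
      push_cast
      ring
    rw [one_mul, hCdef, hqdef, div_pow, ← h7]
    ring
  -- piece 1 : Ioc 0 c
  have int1 : IntegrableOn F (Ioc 0 c) := by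
    have hbound : IntegrableOn (fun t : ℝ => C * t ^ β) (Ioc 0 c) := by
      apply Integrable.const_mul
      have h1 := intervalIntegral.intervalIntegrable_rpow' (r := β) (a := 0) (b := c) hβ
      rw [intervalIntegrable_iff, uIoc_of_le hc.le] at h1
      exact h1
    refine Integrable.mono' hbound
      ((hcont.mono Ioc_subset_Ioi_self).aestronglyMeasurable measurableSet_Ioc) ?_
    filter_upwards [ae_restrict_mem measurableSet_Ioc] with t ht
    exact tailbound t ht.1 ht.2
  -- piece 2 : Ioi c
  have hIoi : Ioi c ⊆ Ioi (0:ℝ) := Ioi_subset_Ioi hc.le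
  have hF1 : IntegrableOn (fun t : ℝ => Complex.exp (-a * t) *
      ((t:ℂ)^(α-1) * ∏ i, (1 - Complex.exp (-(w i) * t))⁻¹)) (Ioi c) := by
    set K : ℝ := ∏ i : Fin d, (1 - Real.exp (-(w i).re * c))⁻¹ with hKdef
    have hfac : ∀ i : Fin d, 0 < 1 - Real.exp (-(w i).re * c) := by
      intro i
      have : Real.exp (-(w i).re * c) < 1 := by
        rw [Real.exp_lt_one_iff]
        nlinarith [hw i]
      linarith
    refine Integrable.mono'
      ((aux_integrable_rpow_exp ha c (α.re - 1) hc).const_mul K)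
      ((((hcexp (-a)).continuousOn.mul ((hpowcont (α-1)).mul hQcont)).mono hIoi).aestronglyMeasurable
        measurableSet_Ioi) ?_
    filter_upwards [ae_restrict_mem measurableSet_Ioi] with t htc
    have ht : 0 < t := hc.trans htc
    rw [norm_mul, norm_mul, hnormexp, hncpow t ht]
    have hQle : ‖∏ i, (1 - Complex.exp (-(w i) * (t:ℂ)))⁻¹‖ ≤ K := by
      rw [norm_prod, hKdef]
      apply Finset.prod_le_prod (fun i _ => norm_nonneg _)
      intro i _
      rw [norm_inv]
      apply inv_anti₀ (hfac i)
      calc 1 - Real.exp (-(w i).re * c) ≤ 1 - Real.exp (-(w i).re * t) := by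
            have h2 : Real.exp (-(w i).re * t) ≤ Real.exp (-(w i).re * c) := by
              apply Real.exp_le_exp.mpr
              nlinarith [hw i, (show c < t from htc).le]
            linarith
        _ ≤ ‖1 - Complex.exp (-(w i) * (t:ℂ))‖ := by
            have h1 : ‖(1:ℂ)‖ - ‖Complex.exp (-(w i) * (t:ℂ))‖
                ≤ ‖1 - Complex.exp (-(w i) * (t:ℂ))‖ := norm_sub_norm_le _ _
            rw [hnormexp] at h1
            simpa [Complex.neg_re] using h1
    have hrere : (α - 1).re = α.re - 1 := by simp
    have hnre : (-a).re * t = -a.re * t := by simp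
    calc Real.exp ((-a).re * t) * (t ^ (α-1).re * ‖∏ i, (1 - Complex.exp (-(w i) * (t:ℂ)))⁻¹‖)
        ≤ Real.exp ((-a).re * t) * (t ^ (α-1).re * K) := by
          apply mul_le_mul_of_nonneg_left (mul_le_mul_of_nonneg_left hQle (by positivity))
            (Real.exp_nonneg _)
      _ = K * (t ^ (α.re - 1) * Real.exp (-a.re * t)) := by rw [hrere, hnre]; ring
  have hGk : ∀ k ∈ Finset.range (M+1), IntegrableOn (fun t : ℝ => Complex.exp (-a * t) *
      ((t:ℂ)^(α - d - 1) / P * ((-1:ℂ)^k * b k * (t:ℂ)^k / (k.factorial : ℂ)))) (Ioi c) := by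
    intro k _
    refine Integrable.mono'
      ((aux_integrable_rpow_exp ha c (α.re - d - 1 + k) hc).const_mul
        (‖b k‖ / (k.factorial : ℝ) * ‖P‖⁻¹))
      ((((hcexp (-a)).continuousOn.mul (((hpowcont (α - d - 1)).div_const P).mul
        ((continuous_const.mul
          (Complex.continuous_ofReal.pow k)).div_const _).continuousOn)).mono hIoi).aestronglyMeasurable
        measurableSet_Ioi) ?_
    filter_upwards [ae_restrict_mem measurableSet_Ioi] with t htc
    have ht : 0 < t := hc.trans htc
    rw [norm_mul, norm_mul, norm_div, hnormexp, hncpow t ht, hre1]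
    have h8 : ‖(-1:ℂ)^k * b k * (t:ℂ)^k / (k.factorial : ℂ)‖ = ‖b k‖ * t ^ k / (k.factorial : ℝ) := by
      simp [norm_div, norm_mul, norm_pow, Complex.norm_real, Real.norm_eq_abs, _root_.abs_of_pos ht]
    rw [h8]
    have h9 : t ^ (α.re - (d:ℝ) - 1) * t ^ (k:ℕ) = t ^ (α.re - d - 1 + k) := by
      rw [← Real.rpow_natCast t k, ← Real.rpow_add ht]
    have hnre : (-a).re * t = -a.re * t := by simp
    rw [hnre]
    calc Real.exp (-a.re * t) * (t ^ (α.re - (d:ℝ) - 1) / ‖P‖ * (‖b k‖ * t ^ k / (k.factorial:ℝ)))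
        = ‖b k‖ / (k.factorial : ℝ) * ‖P‖⁻¹ * ((t ^ (α.re - (d:ℝ) - 1) * t ^ k) * Real.exp (-a.re * t)) := by
          ring
      _ = ‖b k‖ / (k.factorial : ℝ) * ‖P‖⁻¹ * (t ^ (α.re - (d:ℝ) - 1 + k) * Real.exp (-a.re * t)) := by
          rw [h9]
      _ ≤ ‖b k‖ / (k.factorial : ℝ) * ‖P‖⁻¹ * (t ^ (α.re - (d:ℝ) - 1 + k) * Real.exp (-a.re * t)) :=
          le_rfl
  have int2 : IntegrableOn F (Ioi c) := by
    have e : F = fun t : ℝ => (Complex.exp (-a * t) *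
        ((t:ℂ)^(α-1) * ∏ i, (1 - Complex.exp (-(w i) * t))⁻¹)) -
        (∑ k ∈ Finset.range (M+1), Complex.exp (-a * t) *
          ((t:ℂ)^(α - d - 1) / P * ((-1:ℂ)^k * b k * (t:ℂ)^k / (k.factorial : ℂ)))) := by
      funext t
      simp only [hF, Finset.mul_sum, mul_sub]
    rw [e]
    exact hF1.sub (integrable_finset_sum _ hGk)
  rw [← Ioc_union_Ioi_eq_Ioi hc.le]
  exact int1.union int2
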